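/- Let φ be the endomorphism of the free group F_2 with basis a, b defined by φ(a) = a b a^{-1} and φ(b) = a^{-1}. Then φ is injective, fix(φ) = ⟨a b a^{-1} b^{-1}⟩ (infinite cyclic), and φ has no attracting fixed words, i.e., a(φ) = 0. -/

import Mathlib

open Filter

namespace ZZFix

/-- A letter: a basis element together with a sign. -/
abbrev Letter (α : Type*) := α × Bool

/-- The inverse letter. -/
def linv {α : Type*} (l : Letter α) : Letter α := (l.1, !l.2)

/-- An infinite reduced word: a sequence of letters with no adjacent cancellation. -/
def InfWord (α : Type*) : Type _ := {w : ℕ → Letter α // ∀ i, w (i + 1) ≠ linv (w i)}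

/-- The length-`i` prefix of an infinite reduced word, as a list of letters. -/
def prefixList {α : Type*} (W : InfWord α) (i : ℕ) : List (Letter α) :=
  (List.range i).map W.1

/-- The length-`i` prefix of an infinite reduced word, as an element of the free group. -/
def wordPrefix {α : Type*} (W : InfWord α) (i : ℕ) : FreeGroup α :=
  FreeGroup.mk (prefixList W i)

/-- Length of the longest common prefix of two lists. -/
def commonPrefixLength {β : Type*} [DecidableEq β] : List β → List β → ℕ
  | a :: as, b :: bs => if a = b then commonPrefixLength as bs + 1 else 0
  | _, _ => 0

variable {α : Type*} [DecidableEq α]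

/-- `|W ∧ g|` for an infinite reduced word `W` and a finite reduced word `g`. -/
def wedgeF (W : InfWord α) (g : FreeGroup α) : ℕ :=
  commonPrefixLength (prefixList W (FreeGroup.toWord g).length) (FreeGroup.toWord g)

/-- `|g ∧ h|` for finite reduced words. -/
def wedgeFF (g h : FreeGroup α) : ℕ :=
  commonPrefixLength (FreeGroup.toWord g) (FreeGroup.toWord h)

/-- `|W ∧ V|` for infinite reduced words, valued in `ℕ∞` (it is `⊤` iff `W = V`). -/
noncomputable def wedgeI {α : Type*} (W V : InfWord α) : ℕ∞ :=
  sSup ((fun i : ℕ => (i : ℕ∞)) '' {i : ℕ | prefixList W i = prefixList V i})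

/-- A sequence of group elements converges to the infinite reduced word `W`
(in the initial segment metric on `F ⊔ ∂F`). -/
def ConvergesTo (u : ℕ → FreeGroup α) (W : InfWord α) : Prop :=
  Tendsto (fun i => wedgeF W (u i)) atTop atTop

/-- `W` is a fixed infinite word of `φ`: `|W ∧ φ(W_i)| → ∞`. -/
def IsFixedInfWord (φ : FreeGroup α →* FreeGroup α) (W : InfWord α) : Prop :=
  Tendsto (fun i => wedgeF W (φ (wordPrefix W i))) atTop atTop

/-- `W` is an attracting fixed word of `φ`: it is fixed and `|W ∧ φ(W_i)| - i → +∞`. -/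
def IsAttractingFixedWord (φ : FreeGroup α →* FreeGroup α) (W : InfWord α) : Prop :=
  IsFixedInfWord φ W ∧
    Tendsto (fun i => (wedgeF W (φ (wordPrefix W i)) : ℤ) - (i : ℤ)) atTop atTop

/-- The fixed subgroup of an endomorphism. -/
def fixedSubgroup {G : Type*} [Group G] (φ : G →* G) : Subgroup G where
  carrier := {g | φ g = g}
  one_mem' := map_one φ
  mul_mem' := by
    intro a b ha hb
    simp only [Set.mem_setOf_eq] at *
    rw [map_mul, ha, hb]
  inv_mem' := by
    intro a ha
    simp only [Set.mem_setOf_eq] at *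
    rw [map_inv, ha]

/-- The rank (minimal number of generators) of a subgroup, valued in `ℕ∞`. -/
noncomputable def grpRank {G : Type*} [Group G] (H : Subgroup G) : ℕ∞ :=
  sInf {k : ℕ∞ | ∃ S : Finset G, Subgroup.closure (S : Set G) = H ∧ (S.card : ℕ∞) = k}

/-- Two infinite reduced words are equivalent (w.r.t. `φ`) if `W' = U·W` for some
`U ∈ fix(φ)`, i.e. the reduced products `U·W_i` converge to `W'`. -/
def EquivFixedWords (φ : FreeGroup α →* FreeGroup α) (W W' : InfWord α) : Prop :=
  ∃ U ∈ fixedSubgroup φ, ConvergesTo (fun i => U * wordPrefix W i) W'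

/-- `a(φ)`: the number of equivalence classes of attracting fixed words, in `ℕ∞`. -/
noncomputable def aCard (φ : FreeGroup α →* FreeGroup α) : ℕ∞ :=
  ENat.card (Quot fun (W W' : {W : InfWord α // IsAttractingFixedWord φ W}) =>
    EquivFixedWords φ W.1 W'.1)

/-- The inner automorphism `i_c : g ↦ c g c⁻¹`, as a monoid homomorphism. -/
def innerAut {G : Type*} [Group G] (c : G) : G →* G := (MulAut.conj c).toMonoidHom

/-- Two endomorphisms are similar if `ψ₂ = i_c ∘ ψ₁ ∘ i_c⁻¹` for some `c`. -/
def Similar {G : Type*} [Group G] (ψ₁ ψ₂ : G →* G) : Prop :=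
  ∃ c : G, ψ₂ = ((innerAut c).comp ψ₁).comp (innerAut c⁻¹)

/-- The trace of the endomorphism of `ℤⁿ` induced by `φ` on the abelianization. -/
def abTrace {n : ℕ} (φ : FreeGroup (Fin n) →* FreeGroup (Fin n)) : ℤ :=
  ∑ i : Fin n, Multiplicative.toAdd
    ((FreeGroup.lift fun k => Multiplicative.ofAdd (if k = i then (1 : ℤ) else 0))
      (φ (FreeGroup.of i)))

/-- The constant infinite reduced word `l l l ⋯`. -/
def constWord {α : Type*} (l : Letter α) : InfWord α :=
  ⟨fun _ => l, fun _ h => by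
    have h2 := congrArg Prod.snd h
    simp [linv] at h2⟩

/-- `W` is an attracting fixed point of `φ`: it is fixed, and there is `i₀` such that
every finite or infinite reduced word `V` with `|W ∧ V| ≥ i₀` satisfies
`|W ∧ φᵖ(V)| → ∞` as `p → ∞`. -/
def IsAttractingFixedPoint (φ : FreeGroup α →* FreeGroup α) (W : InfWord α) : Prop :=
  IsFixedInfWord φ W ∧
    ∃ i₀ : ℕ,
      (∀ g : FreeGroup α, i₀ ≤ wedgeF W g →
        Tendsto (fun p => wedgeF W ((⇑φ)^[p] g)) atTop atTop) ∧
      (∀ V : InfWord α, (i₀ : ℕ∞) ≤ wedgeI W V →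
        ∀ Vs : ℕ → InfWord α, Vs 0 = V →
          (∀ p, ConvergesTo (fun i => φ (wordPrefix (Vs p) i)) (Vs (p + 1))) →
          Tendsto (fun p => wedgeI W (Vs p)) atTop atTop)

open scoped Classical in
/-- The initial segment metric. -/
noncomputable def distIS {α : Type*} (W V : InfWord α) : ℝ :=
  if W = V then 0 else 1 / (1 + ((wedgeI W V).toNat : ℝ))


section Aux

-- auxiliary lemmas
lemma commonPrefixLength_le_right {β : Type*} [DecidableEq β] :
    ∀ (l m : List β), commonPrefixLength l m ≤ m.length
  | a :: as, b :: bs => by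
    rw [commonPrefixLength]
    split
    · simpa using commonPrefixLength_le_right as bs
    · simp
  | [], m => by cases m <;> simp [commonPrefixLength]
  | l :: ls, [] => by simp [commonPrefixLength]

lemma wedgeF_le (W : InfWord α) (g : FreeGroup α) :
    wedgeF W g ≤ (FreeGroup.toWord g).length :=
  commonPrefixLength_le_right _ _

lemma reduce_eq_self_of_chain : ∀ {L : List (Letter α)},
    L.Chain' (fun a b => b ≠ linv a) → FreeGroup.reduce L = L
  | [], _ => rfl
  | [x], _ => rfl
  | x :: y :: ys, h => by
    unfold List.Chain' at h
    rw [List.isChain_cons_cons] at h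
    have ih := reduce_eq_self_of_chain h.2
    rw [FreeGroup.reduce.cons, ih]
    have : ¬(x.1 = y.1 ∧ x.2 = !y.2) := by
      rintro ⟨h1, h2⟩
      exact h.1 (by simp [linv, ← h1, h2, Prod.ext_iff])
    simp [this]

lemma prefixList_chain (W : InfWord α) (i : ℕ) :
    (prefixList W i).Chain' (fun a b => b ≠ linv a) := by
  rw [prefixList]
  unfold List.Chain'
  rw [List.isChain_map]
  cases i with
  | zero => simp
  | succ n =>
    rw [List.isChain_range_succ]
    intro m _
    exact W.2 m

lemma toWord_wordPrefix (W : InfWord α) (i : ℕ) :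
    (wordPrefix W i).toWord = prefixList W i := by
  rw [wordPrefix, FreeGroup.toWord_mk, reduce_eq_self_of_chain (prefixList_chain W i)]

lemma length_toWord_wordPrefix (W : InfWord α) (i : ℕ) :
    (wordPrefix W i).toWord.length = i := by
  rw [toWord_wordPrefix, prefixList, List.length_map, List.length_range]

lemma length_toWord_mul_le (g h : FreeGroup α) :
    ((g * h).toWord).length ≤ g.toWord.length + h.toWord.length := by
  simpa using (FreeGroup.toWord_mul_sublist g h).length_le

lemma length_lift_le (f : α → FreeGroup α) (hf : ∀ x, (f x).toWord.length ≤ 1) :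
    ∀ g : FreeGroup α, ((FreeGroup.lift f g).toWord).length ≤ g.toWord.length := by
  have key : ∀ L : List (Letter α),
      ((FreeGroup.lift f (FreeGroup.mk L)).toWord).length ≤ L.length := by
    intro L
    induction L with
    | nil =>
      show ((FreeGroup.lift f (1 : FreeGroup α)).toWord).length ≤ 0
      simp
    | cons x xs ih =>
      have : FreeGroup.mk (x :: xs) = FreeGroup.mk [x] * FreeGroup.mk xs := by
        rw [FreeGroup.mul_mk]; rfl
      rw [this, map_mul]
      refine le_trans (length_toWord_mul_le _ _) ?_
      have h1 : ((FreeGroup.lift f (FreeGroup.mk [x])).toWord).length ≤ 1 := by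
        rcases x with ⟨a, b⟩
        cases b
        · have : FreeGroup.mk [(a, false)] = (FreeGroup.of a)⁻¹ := by
            rw [FreeGroup.of, FreeGroup.inv_mk]; rfl
          rw [this, map_inv, FreeGroup.toWord_inv, FreeGroup.invRev_length,
            FreeGroup.lift_apply_of]
          exact hf a
        · have : FreeGroup.mk [(a, true)] = FreeGroup.of a := rfl
          rw [this, FreeGroup.lift_apply_of]
          exact hf a
      calc _ ≤ 1 + xs.length := Nat.add_le_add h1 ih
      _ = (x :: xs).length := by simp [Nat.add_comm]
  intro g
  conv_lhs => rw [← FreeGroup.mk_toWord (x := g)]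
  exact key g.toWord


/-- The integer Heisenberg group. -/
@[ext] structure Heis where
  x : ℤ
  y : ℤ
  t : ℤ

namespace Heis

instance : Mul Heis := ⟨fun u v => ⟨u.x + v.x, u.y + v.y, u.t + v.t + u.x * v.y⟩⟩
instance : One Heis := ⟨⟨0, 0, 0⟩⟩
instance : Inv Heis := ⟨fun u => ⟨-u.x, -u.y, u.x * u.y - u.t⟩⟩

@[simp] lemma mul_x (u v : Heis) : (u * v).x = u.x + v.x := rfl
@[simp] lemma mul_y (u v : Heis) : (u * v).y = u.y + v.y := rfl
@[simp] lemma mul_t (u v : Heis) : (u * v).t = u.t + v.t + u.x * v.y := rfl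
@[simp] lemma one_x : (1 : Heis).x = 0 := rfl
@[simp] lemma one_y : (1 : Heis).y = 0 := rfl
@[simp] lemma one_t : (1 : Heis).t = 0 := rfl
@[simp] lemma inv_x (u : Heis) : (u⁻¹).x = -u.x := rfl
@[simp] lemma inv_y (u : Heis) : (u⁻¹).y = -u.y := rfl
@[simp] lemma inv_t (u : Heis) : (u⁻¹).t = u.x * u.y - u.t := rfl

instance : Group Heis where
  mul_assoc u v w := by ext <;> simp <;> ring
  one_mul u := by ext <;> simp
  mul_one u := by ext <;> simp
  inv_mul_cancel u := by ext <;> simp <;> ring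

/-- First coordinate as a homomorphism. -/
def pix : Heis →* Multiplicative ℤ where
  toFun u := Multiplicative.ofAdd u.x
  map_one' := rfl
  map_mul' u v := by simp [ofAdd_add]

/-- Second coordinate as a homomorphism. -/
def piy : Heis →* Multiplicative ℤ where
  toFun u := Multiplicative.ofAdd u.y
  map_one' := rfl
  map_mul' u v := by simp [ofAdd_add]

/-- Central embedding of ℤ. -/
def zeta : Multiplicative ℤ →* Heis where
  toFun s := ⟨0, 0, s.toAdd⟩
  map_one' := rfl
  map_mul' u v := by ext <;> simp

lemma central_zpow (t k : ℤ) : (Heis.mk 0 0 t) ^ k = Heis.mk 0 0 (t * k) := by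
  have h1 : Heis.mk 0 0 t = zeta (Multiplicative.ofAdd t) := rfl
  rw [h1, ← map_zpow]
  have : (Multiplicative.ofAdd t) ^ k = Multiplicative.ofAdd (t * k) := by
    rw [← ofAdd_zsmul, smul_eq_mul]; congr 1; ring
  rw [this]; rfl

end Heis

lemma pix_zpow (u : Heis) (k : ℤ) :
    ((Heis.pix (u ^ k)) : Multiplicative ℤ).toAdd = k * u.x := by
  rw [map_zpow]
  simp [Heis.pix, toAdd_zpow]

lemma piy_zpow (u : Heis) (k : ℤ) :
    ((Heis.piy (u ^ k)) : Multiplicative ℤ).toAdd = k * u.y := by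
  rw [map_zpow]
  simp [Heis.piy, toAdd_zpow]


lemma freeGroup_subsingleton_eq_one {ι : Type*} [IsEmpty ι] (w : FreeGroup ι) : w = 1 := by
  have h : w.toWord = [] := by
    cases hw : w.toWord with
    | nil => rfl
    | cons a l => exact (IsEmpty.false a.1).elim
  rw [← FreeGroup.mk_toWord (x := w), h]
  rfl

lemma freeGroup_cyclic_of_subsingleton {ι : Type*} [Subsingleton ι] (x0 : ι)
    (w : FreeGroup ι) : ∃ n : ℤ, w = (FreeGroup.of x0) ^ n := by
  induction w using FreeGroup.induction_on with
  | C1 => exact ⟨0, by simp⟩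
  | of x => exact ⟨1, by rw [Subsingleton.elim x x0]; simp⟩
  | inv_of x _ => exact ⟨-1, by rw [Subsingleton.elim x x0]; simp⟩
  | mul u v hu hv =>
    obtain ⟨n, rfl⟩ := hu
    obtain ⟨m, rfl⟩ := hv
    exact ⟨n + m, by rw [← zpow_add]⟩

/-- Two commuting elements of a free group are powers of a common element. -/
lemma commute_powers {β : Type*} (g c : FreeGroup β) (hcomm : Commute g c) :
    ∃ z : FreeGroup β, (∃ m : ℤ, g = z ^ m) ∧ (∃ k : ℤ, c = z ^ k) := by
  classical
  set H : Subgroup (FreeGroup β) := Subgroup.closure {g, c} with hH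
  have hgH : g ∈ H := Subgroup.subset_closure (by simp)
  have hcH : c ∈ H := Subgroup.subset_closure (by simp)
  -- all elements of H commute
  have hpair : ∀ x ∈ ({g, c} : Set (FreeGroup β)), ∀ y ∈ ({g, c} : Set (FreeGroup β)),
      Commute x y := by
    rintro x (rfl | rfl) y (rfl | rfl)
    exacts [Commute.refl _, hcomm, hcomm.symm, Commute.refl _]
  have hHcomm : ∀ x ∈ H, ∀ y ∈ H, Commute x y := by
    intro x hx y hy
    induction hx, hy using Subgroup.closure_induction₂ with
    | mem a b hb hc => exact hpair _ hb _ hc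
    | one_left => exact Commute.one_left _
    | one_right => exact Commute.one_right _
    | mul_left _ _ _ _ _ _ h1 h2 => exact h1.mul_left h2
    | mul_right _ _ _ _ _ _ h1 h2 => exact h1.mul_right h2
    | inv_left _ _ _ _ h => exact h.inv_left
    | inv_right _ _ _ _ h => exact h.inv_right
  -- H is a free group (Nielsen–Schreier)
  haveI : IsFreeGroup H := inferInstance
  -- its generators set is a subsingleton
  haveI : Subsingleton (IsFreeGroup.Generators H) := by
    constructor
    intro a b
    by_contra hab
    let σ : Equiv.Perm (Fin 3) := Equiv.swap 0 1
    let τ : Equiv.Perm (Fin 3) := Equiv.swap 1 2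
    have hστ : σ * τ ≠ τ * σ := by decide
    let F : H →* Equiv.Perm (Fin 3) :=
      IsFreeGroup.lift (fun i => if i = a then σ else if i = b then τ else 1)
    have hcab : IsFreeGroup.of a * IsFreeGroup.of b
        = IsFreeGroup.of b * IsFreeGroup.of (G := H) a := by
      have := hHcomm _ (IsFreeGroup.of (G := H) a).2 _ (IsFreeGroup.of (G := H) b).2
      exact Subtype.coe_injective this
    have := congrArg F hcab
    rw [map_mul, map_mul] at this
    simp only [F, IsFreeGroup.lift_of, if_pos rfl, if_neg hab, if_neg (Ne.symm hab)] at this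
    exact hστ this
  -- hence H is cyclic
  rcases isEmpty_or_nonempty (IsFreeGroup.Generators H) with hι | ⟨⟨x0⟩⟩
  · have hall : ∀ x : H, x = 1 := by
      intro x
      have h1 : IsFreeGroup.toFreeGroup H x = 1 := freeGroup_subsingleton_eq_one _
      have h2 := congrArg (IsFreeGroup.toFreeGroup H).symm h1
      simpa using h2
    refine ⟨1, ⟨0, ?_⟩, ⟨0, ?_⟩⟩
    · simpa using congrArg ((↑) : H → FreeGroup β) (hall ⟨g, hgH⟩)
    · simpa using congrArg ((↑) : H → FreeGroup β) (hall ⟨c, hcH⟩)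
  · set e := IsFreeGroup.toFreeGroup H
    refine ⟨(e.symm (FreeGroup.of x0) : H), ?_, ?_⟩
    · obtain ⟨n, hn⟩ := freeGroup_cyclic_of_subsingleton x0 (e ⟨g, hgH⟩)
      refine ⟨n, ?_⟩
      have : (⟨g, hgH⟩ : H) = (e.symm (FreeGroup.of x0)) ^ n := by
        apply e.injective
        rw [hn, map_zpow, MulEquiv.apply_symm_apply]
      simpa [SubgroupClass.coe_zpow] using congrArg ((↑) : H → FreeGroup β) this
    · obtain ⟨n, hn⟩ := freeGroup_cyclic_of_subsingleton x0 (e ⟨c, hcH⟩)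
      refine ⟨n, ?_⟩
      have : (⟨c, hcH⟩ : H) = (e.symm (FreeGroup.of x0)) ^ n := by
        apply e.injective
        rw [hn, map_zpow, MulEquiv.apply_symm_apply]
      simpa [SubgroupClass.coe_zpow] using congrArg ((↑) : H → FreeGroup β) this


end Aux

/-- Example 6.3: for `φ(a) = a b a⁻¹`, `φ(b) = a⁻¹` on `F₂`,
`φ` is injective, `fix(φ) = ⟨a b a⁻¹ b⁻¹⟩`, and `φ` has no attracting fixed words,
so `a(φ) = 0`. -/
theorem stmt16 (φ : FreeGroup (Fin 2) →* FreeGroup (Fin 2))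
    (ha : φ (FreeGroup.of 0) =
      FreeGroup.of 0 * FreeGroup.of 1 * (FreeGroup.of 0)⁻¹)
    (hb : φ (FreeGroup.of 1) = (FreeGroup.of 0)⁻¹) :
    Function.Injective φ ∧
    fixedSubgroup φ = Subgroup.zpowers
      (FreeGroup.of 0 * FreeGroup.of 1 * (FreeGroup.of 0)⁻¹ * (FreeGroup.of 1)⁻¹) ∧
    (∀ W : InfWord (Fin 2), ¬ IsAttractingFixedWord φ W) ∧
    aCard φ = 0 := by
  classical
  have hmem : ∀ g, g ∈ fixedSubgroup φ ↔ φ g = g := fun g => Iff.rfl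
  set c : FreeGroup (Fin 2) :=
    FreeGroup.of 0 * FreeGroup.of 1 * (FreeGroup.of 0)⁻¹ * (FreeGroup.of 1)⁻¹ with hc
  -- injectivity
  have hinj : Function.Injective φ := by
    set ψ : FreeGroup (Fin 2) →* FreeGroup (Fin 2) :=
      FreeGroup.lift (fun i => if i = 0 then (FreeGroup.of 1)⁻¹
        else FreeGroup.of 1 * FreeGroup.of 0 * (FreeGroup.of 1)⁻¹) with hψ
    have hcomp : ψ.comp φ = MonoidHom.id _ := by
      apply FreeGroup.ext_hom
      intro i
      fin_cases i
      · show ψ (φ (FreeGroup.of 0)) = FreeGroup.of 0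
        rw [ha]
        simp only [map_mul, map_inv, hψ, FreeGroup.lift_apply_of]
        norm_num
        group
      · show ψ (φ (FreeGroup.of 1)) = FreeGroup.of 1
        rw [hb]
        simp only [map_inv, hψ, FreeGroup.lift_apply_of]
        norm_num
    intro x y hxy
    have h1 : ψ (φ x) = ψ (φ y) := congrArg ψ hxy
    have h2 := DFunLike.congr_fun hcomp x
    have h3 := DFunLike.congr_fun hcomp y
    simp only [MonoidHom.coe_comp, Function.comp_apply, MonoidHom.id_apply] at h2 h3
    rwa [h2, h3] at h1
  -- φ fixes c
  have hφc : φ c = c := by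
    rw [hc]
    simp only [map_mul, map_inv, ha, hb]
    group
  -- φ^4 is conjugation by c
  have hφ4 : ∀ x, φ (φ (φ (φ x))) = c * x * c⁻¹ := by
    have heq : ((φ.comp φ).comp (φ.comp φ)) = innerAut c := by
      apply FreeGroup.ext_hom
      intro i
      fin_cases i
      · show φ (φ (φ (φ (FreeGroup.of 0)))) = innerAut c (FreeGroup.of 0)
        simp only [innerAut, MulEquiv.toMonoidHom_eq_coe, MonoidHom.coe_coe, MulAut.conj_apply]
        rw [ha]
        simp only [map_mul, map_inv, ha, hb]
        rw [hc]
        group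
      · show φ (φ (φ (φ (FreeGroup.of 1)))) = innerAut c (FreeGroup.of 1)
        simp only [innerAut, MulEquiv.toMonoidHom_eq_coe, MonoidHom.coe_coe, MulAut.conj_apply]
        rw [hb]
        simp only [map_mul, map_inv, ha, hb]
        rw [hc]
        group
    intro x
    have h5 := DFunLike.congr_fun heq x
    simp only [MonoidHom.coe_comp, Function.comp_apply, innerAut,
      MulEquiv.toMonoidHom_eq_coe, MonoidHom.coe_coe, MulAut.conj_apply] at h5
    exact h5
  -- the fixed subgroup
  have hfix : fixedSubgroup φ = Subgroup.zpowers c := by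
    apply le_antisymm
    · intro g hg
      rw [hmem] at hg
      have hgfix4 : c * g * c⁻¹ = g := by
        rw [← hφ4 g, hg, hg, hg, hg]
      have hcomm : Commute g c := by
        have : c * g = g * c := by
          calc c * g = (c * g * c⁻¹) * c := by group
          _ = g * c := by rw [hgfix4]
        exact this.symm
      obtain ⟨z, ⟨m, hgm⟩, ⟨k, hck⟩⟩ := commute_powers g c hcomm
      -- the Heisenberg argument: c is not a proper power
      set f : FreeGroup (Fin 2) →* Heis :=
        FreeGroup.lift (fun i => if i = 0 then ⟨1, 0, 0⟩ else ⟨0, 1, 0⟩) with hf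
      have hfc : f c = Heis.mk 0 0 1 := by
        rw [hc]
        simp only [map_mul, map_inv, hf, FreeGroup.lift_apply_of]
        norm_num
        ext <;> simp
      have hfzk : (f z) ^ k = Heis.mk 0 0 1 := by rw [← map_zpow, ← hck, hfc]
      have hk0 : k ≠ 0 := by
        rintro rfl
        rw [zpow_zero] at hfzk
        have := congrArg Heis.t hfzk
        simp at this
      have hx : (f z).x = 0 := by
        have h1 := pix_zpow (f z) k
        rw [hfzk] at h1
        simp only [Heis.pix, MonoidHom.coe_mk, OneHom.coe_mk, toAdd_ofAdd] at h1
        rcases mul_eq_zero.mp h1.symm with h | h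
        · exact absurd h hk0
        · exact h
      have hy : (f z).y = 0 := by
        have h1 := piy_zpow (f z) k
        rw [hfzk] at h1
        simp only [Heis.piy, MonoidHom.coe_mk, OneHom.coe_mk, toAdd_ofAdd] at h1
        rcases mul_eq_zero.mp h1.symm with h | h
        · exact absurd h hk0
        · exact h
      have hfz : f z = Heis.mk 0 0 (f z).t := by
        ext <;> simp [hx, hy]
      have ht : (f z).t * k = 1 := by
        have h2 := Heis.central_zpow (f z).t k
        rw [← hfz, hfzk] at h2
        exact (congrArg Heis.t h2).symm
      have hku : IsUnit k := IsUnit.of_mul_eq_one (a := k) ((f z).t) (by linarith [mul_comm ((f z).t) k])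
      rcases Int.isUnit_iff.mp hku with rfl | rfl
      · rw [zpow_one] at hck
        exact Subgroup.mem_zpowers_iff.mpr ⟨m, by rw [hck, ← hgm]⟩
      · have hzc : z = c⁻¹ := by
          rw [hck]
          group
        refine Subgroup.mem_zpowers_iff.mpr ⟨-m, ?_⟩
        rw [hgm, hzc]
        group
    · rw [Subgroup.zpowers_le]
      exact (hmem c).mpr hφc
  -- no attracting fixed words
  have hnoatt : ∀ W : InfWord (Fin 2), ¬ IsAttractingFixedWord φ W := by
    intro W hW
    set ρ : FreeGroup (Fin 2) →* FreeGroup (Fin 2) :=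
      FreeGroup.lift (fun i => if i = 0 then FreeGroup.of 1 else (FreeGroup.of 0)⁻¹) with hρ
    have hφρ : ∀ g, φ g = FreeGroup.of 0 * ρ g * (FreeGroup.of 0)⁻¹ := by
      have heq : φ = (innerAut (FreeGroup.of 0)).comp ρ := by
        apply FreeGroup.ext_hom
        intro i
        fin_cases i
        · show φ (FreeGroup.of 0) = ((innerAut (FreeGroup.of 0)).comp ρ) (FreeGroup.of 0)
          rw [ha]
          simp only [MonoidHom.coe_comp, Function.comp_apply, hρ, FreeGroup.lift_apply_of, innerAut,
            MulEquiv.toMonoidHom_eq_coe, MonoidHom.coe_coe, MulAut.conj_apply]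
          norm_num
        · show φ (FreeGroup.of 1) = ((innerAut (FreeGroup.of 0)).comp ρ) (FreeGroup.of 1)
          rw [hb]
          simp only [MonoidHom.coe_comp, Function.comp_apply, hρ, FreeGroup.lift_apply_of, innerAut,
            MulEquiv.toMonoidHom_eq_coe, MonoidHom.coe_coe, MulAut.conj_apply]
          norm_num
      intro g
      rw [heq]
      simp [innerAut]
    have hρlen : ∀ g : FreeGroup (Fin 2), (ρ g).toWord.length ≤ g.toWord.length := by
      rw [hρ]
      apply length_lift_le
      intro x
      fin_cases x <;>
        simp [FreeGroup.toWord_of, FreeGroup.toWord_inv, FreeGroup.invRev_length]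
    have hbound : ∀ i, wedgeF W (φ (wordPrefix W i)) ≤ i + 2 := by
      intro i
      refine (wedgeF_le _ _).trans ?_
      rw [hφρ]
      calc (FreeGroup.of 0 * ρ (wordPrefix W i) * (FreeGroup.of 0)⁻¹).toWord.length
          ≤ (FreeGroup.of 0 * ρ (wordPrefix W i)).toWord.length
            + ((FreeGroup.of 0)⁻¹ : FreeGroup (Fin 2)).toWord.length :=
            length_toWord_mul_le _ _
        _ ≤ ((FreeGroup.of (0 : Fin 2)).toWord.length + (ρ (wordPrefix W i)).toWord.length)
            + ((FreeGroup.of 0)⁻¹ : FreeGroup (Fin 2)).toWord.length :=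
            Nat.add_le_add_right (length_toWord_mul_le _ _) _
        _ ≤ (1 + i) + 1 := by
            refine Nat.add_le_add (Nat.add_le_add ?_ ?_) ?_
            · simp [FreeGroup.toWord_of]
            · exact (hρlen _).trans (le_of_eq (length_toWord_wordPrefix W i))
            · simp [FreeGroup.toWord_inv, FreeGroup.invRev_length, FreeGroup.toWord_of]
        _ = i + 2 := by omega
    obtain ⟨i, hi⟩ := (hW.2.eventually (eventually_ge_atTop (3 : ℤ))).exists
    have h2 := hbound i
    omega
  refine ⟨hinj, hfix, hnoatt, ?_⟩
  have hempty : IsEmpty {W : InfWord (Fin 2) // IsAttractingFixedWord φ W} :=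
    ⟨fun W => hnoatt W.1 W.2⟩
  rw [aCard, ENat.card_eq_zero_iff_empty]
  refine ⟨fun q => ?_⟩
  obtain ⟨a⟩ := Quot.exists_rep q
  exact hempty.false a


end ZZFix
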